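/- For the full 22-generator Basis I chain complex (V, ∂) one has ∂ ∘ ∂ = 0, the rank of ∂ equals 10, the kernel of ∂ has dimension 12, and the quotient ker ∂ / im ∂ has dimension 2 over the field with two elements; that is, the homology of (V, ∂) is isomorphic to ℤ₂ ⊕ ℤ₂. -/

import Mathlib

/-- The basis vectors `X, A, B, C₁, C₂, C₃, D₁₁, D₁₂, D₂₁, D₂₂, E₁₁, E₁₂, E₂₁, E₂₂,
F₁, F₂, G₁₁, G₁₂, G₂₁, G₂₂, G₃₁, G₃₂` (in this order) of the 22-dimensional vector
space `V = (Fin 22 → ZMod 2)` over the field with two elements. -/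
def e (i : Fin 22) : Fin 22 → ZMod 2 := Pi.single i 1

def Mm : Matrix (Fin 22) (Fin 22) (ZMod 2) := Matrix.of ![
  ![0,0,0,0,1,0,0,0,0,0,1,0,0,0,0,0,0,0,0,0,0,0],
  ![0,0,0,0,0,0,0,0,0,0,0,0,0,0,0,1,0,0,0,0,0,0],
  ![0,1,0,0,0,1,1,0,0,0,0,0,0,0,0,0,0,0,0,0,0,0],
  ![0,0,0,0,1,0,0,0,0,0,0,0,0,0,1,0,0,0,0,0,0,0],
  ![0,0,0,0,0,0,0,0,0,0,0,0,0,0,0,0,0,0,0,0,0,0],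
  ![0,0,0,0,0,0,0,0,0,0,0,0,0,0,0,1,0,0,0,0,0,0],
  ![0,0,0,0,0,0,0,0,0,0,0,0,0,0,0,0,0,0,0,0,0,0],
  ![0,0,0,0,0,0,1,0,0,0,0,0,0,0,0,0,0,0,0,0,0,0],
  ![0,0,0,0,0,0,0,0,0,0,0,0,0,0,0,0,0,0,0,0,1,0],
  ![0,0,0,0,0,0,0,0,1,0,0,0,0,0,0,0,0,0,0,0,0,1],
  ![0,0,0,0,0,0,0,0,0,0,0,0,0,0,0,0,0,0,0,0,0,0],
  ![0,0,0,0,0,0,0,0,0,0,1,0,0,0,1,0,0,0,0,0,0,0],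
  ![0,0,0,0,0,0,0,0,0,0,0,0,0,0,0,0,0,0,1,0,0,0],
  ![0,0,0,0,0,0,0,0,0,0,0,0,1,0,0,1,0,0,0,1,0,0],
  ![0,0,0,0,0,0,0,0,0,0,0,0,0,0,0,0,0,0,0,0,0,0],
  ![0,0,0,0,0,0,0,0,0,0,0,0,0,0,0,0,0,0,0,0,0,0],
  ![0,0,0,0,0,0,1,0,0,0,0,0,0,0,0,0,0,0,1,0,0,0],
  ![0,0,0,0,0,0,0,1,0,0,0,0,0,0,0,0,1,0,0,1,0,0],
  ![0,0,0,0,0,0,0,0,0,0,0,0,0,0,0,0,0,0,0,0,0,0],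
  ![0,0,0,0,0,0,0,0,0,0,0,0,0,0,0,0,0,0,1,0,0,0],
  ![0,0,0,0,0,0,0,0,0,0,0,0,0,0,0,0,0,0,0,0,0,0],
  ![0,0,0,0,0,0,0,0,0,0,0,0,0,0,0,0,0,0,0,0,1,0]]
def Jm : Matrix (Fin 22) (Fin 10) (ZMod 2) := Matrix.of ![
  ![0,0,0,0,0,0,0,0,0,0],
  ![1,0,1,0,0,0,0,0,0,0],
  ![0,0,0,0,0,0,0,0,0,0],
  ![0,0,0,0,0,0,0,0,0,0],
  ![0,1,0,0,0,0,0,0,0,0],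
  ![0,0,0,0,0,0,0,0,0,0],
  ![0,0,1,0,0,0,0,0,0,0],
  ![0,0,0,1,0,0,0,0,0,0],
  ![0,0,0,0,1,0,0,0,0,0],
  ![0,0,0,0,0,0,0,0,0,0],
  ![0,0,0,0,0,1,0,0,0,0],
  ![0,0,0,0,0,0,0,0,0,0],
  ![0,0,0,0,0,0,1,1,0,0],
  ![0,0,0,0,0,0,0,0,0,0],
  ![0,0,0,0,0,0,0,0,0,0],
  ![0,0,0,0,0,0,0,1,0,0],
  ![0,0,0,0,0,0,0,0,0,0],
  ![0,0,0,0,0,0,0,0,0,0],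
  ![0,0,0,0,0,0,0,0,1,0],
  ![0,0,0,0,0,0,0,0,0,0],
  ![0,0,0,0,0,0,0,0,0,1],
  ![0,0,0,0,0,0,0,0,0,0]]
def Lm : Matrix (Fin 10) (Fin 22) (ZMod 2) := Matrix.of ![
  ![0,0,1,0,0,0,0,0,0,0,0,0,0,0,0,0,0,0,0,0,0,0],
  ![0,0,0,1,0,0,0,0,0,0,0,0,0,0,0,0,0,0,0,0,0,0],
  ![0,0,0,0,0,0,0,1,0,0,0,0,0,0,0,0,0,0,0,0,0,0],
  ![0,0,0,0,0,0,0,0,0,0,0,0,0,0,0,0,0,1,0,0,0,0],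
  ![0,0,0,0,0,0,0,0,0,1,0,0,0,0,0,0,0,0,0,0,0,0],
  ![0,0,0,0,0,0,0,0,0,0,0,1,0,0,0,0,0,0,0,0,0,0],
  ![0,0,0,0,0,0,0,0,0,0,0,0,0,1,0,0,0,0,0,0,0,0],
  ![0,1,0,0,0,0,0,0,0,0,0,0,0,0,0,0,0,0,0,0,0,0],
  ![0,0,0,0,0,0,0,0,0,0,0,0,1,0,0,0,0,0,0,0,0,0],
  ![0,0,0,0,0,0,0,0,1,0,0,0,0,0,0,0,0,0,0,0,0,0]]
def Km : Matrix (Fin 22) (Fin 12) (ZMod 2) := Matrix.of ![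
  ![1,0,0,0,0,0,0,0,0,0,0,0],
  ![0,0,0,1,0,0,0,0,0,0,0,0],
  ![0,1,0,0,0,0,0,0,0,0,0,0],
  ![0,0,1,0,0,0,0,0,0,0,0,0],
  ![0,0,0,0,0,0,0,1,0,0,0,0],
  ![0,0,0,1,0,0,0,0,0,0,0,0],
  ![0,0,0,0,0,0,0,0,0,0,0,0],
  ![0,0,0,0,0,0,0,0,1,0,1,0],
  ![0,0,0,0,0,0,0,0,0,0,0,1],
  ![0,0,0,0,1,0,0,0,0,0,0,0],
  ![0,0,0,0,0,0,0,1,0,0,0,0],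
  ![0,0,0,0,0,1,0,0,0,0,0,0],
  ![0,0,0,0,0,0,0,0,0,0,1,0],
  ![0,0,0,0,0,0,1,0,0,0,0,0],
  ![0,0,0,0,0,0,0,1,0,0,0,0],
  ![0,0,0,0,0,0,0,0,0,0,0,0],
  ![0,0,0,0,0,0,0,0,1,0,0,0],
  ![0,0,0,0,0,0,0,0,0,1,0,0],
  ![0,0,0,0,0,0,0,0,0,0,0,0],
  ![0,0,0,0,0,0,0,0,0,0,1,0],
  ![0,0,0,0,0,0,0,0,0,0,0,0],
  ![0,0,0,0,0,0,0,0,0,0,0,1]]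
def L2m : Matrix (Fin 12) (Fin 22) (ZMod 2) := Matrix.of ![
  ![1,0,0,0,0,0,0,0,0,0,0,0,0,0,0,0,0,0,0,0,0,0],
  ![0,0,1,0,0,0,0,0,0,0,0,0,0,0,0,0,0,0,0,0,0,0],
  ![0,0,0,1,0,0,0,0,0,0,0,0,0,0,0,0,0,0,0,0,0,0],
  ![0,0,0,0,0,1,0,0,0,0,0,0,0,0,0,0,0,0,0,0,0,0],
  ![0,0,0,0,0,0,0,0,0,1,0,0,0,0,0,0,0,0,0,0,0,0],
  ![0,0,0,0,0,0,0,0,0,0,0,1,0,0,0,0,0,0,0,0,0,0],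
  ![0,0,0,0,0,0,0,0,0,0,0,0,0,1,0,0,0,0,0,0,0,0],
  ![0,0,0,0,0,0,0,0,0,0,0,0,0,0,1,0,0,0,0,0,0,0],
  ![0,0,0,0,0,0,0,0,0,0,0,0,0,0,0,0,1,0,0,0,0,0],
  ![0,0,0,0,0,0,0,0,0,0,0,0,0,0,0,0,0,1,0,0,0,0],
  ![0,0,0,0,0,0,0,0,0,0,0,0,0,0,0,0,0,0,0,1,0,0],
  ![0,0,0,0,0,0,0,0,0,0,0,0,0,0,0,0,0,0,0,0,0,1]]

set_option maxHeartbeats 4000000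
set_option synthInstance.maxHeartbeats 1000000

/-- For the full 22-generator Basis I chain complex `(V, ∂)`: `∂ ∘ ∂ = 0`, the rank of
`∂` is `10`, its kernel is `12`-dimensional, and the homology `ker ∂ / im ∂` is
2-dimensional over `ZMod 2`, i.e. isomorphic to `ℤ₂ ⊕ ℤ₂`. -/
theorem stmt6 (D : (Fin 22 → ZMod 2) →ₗ[ZMod 2] (Fin 22 → ZMod 2))
    (hX : D (e 0) = 0)
    (hA : D (e 1) = e 2)
    (hB : D (e 2) = 0)
    (hC1 : D (e 3) = 0)
    (hC2 : D (e 4) = e 0 + e 3)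
    (hC3 : D (e 5) = e 2)
    (hD11 : D (e 6) = e 2 + e 16 + e 7)
    (hD12 : D (e 7) = e 17)
    (hD21 : D (e 8) = e 9)
    (hD22 : D (e 9) = 0)
    (hE11 : D (e 10) = e 0 + e 11)
    (hE12 : D (e 11) = 0)
    (hE21 : D (e 12) = e 13)
    (hE22 : D (e 13) = 0)
    (hF1 : D (e 14) = e 11 + e 3)
    (hF2 : D (e 15) = e 13 + e 5 + e 1)
    (hG11 : D (e 16) = e 17)
    (hG12 : D (e 17) = 0)
    (hG21 : D (e 18) = e 12 + e 16 + e 19)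
    (hG22 : D (e 19) = e 13 + e 17)
    (hG31 : D (e 20) = e 8 + e 21)
    (hG32 : D (e 21) = e 9) :
    D ∘ₗ D = 0 ∧
    Module.finrank (ZMod 2) ↥(LinearMap.range D) = 10 ∧
    Module.finrank (ZMod 2) ↥(LinearMap.ker D) = 12 ∧
    Module.finrank (ZMod 2)
      (↥(LinearMap.ker D) ⧸
        Submodule.comap (LinearMap.ker D).subtype (LinearMap.range D)) = 2 ∧
    Nonempty
      ((↥(LinearMap.ker D) ⧸
        Submodule.comap (LinearMap.ker D).subtype (LinearMap.range D)) ≃ₗ[ZMod 2]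
        ZMod 2 × ZMod 2) := by
  have hM : D = Matrix.mulVecLin Mm := by
    refine (Pi.basisFun (ZMod 2) (Fin 22)).ext fun i => ?_
    rw [Pi.basisFun_apply, Matrix.mulVecLin_apply, Matrix.mulVec_single_one]
    fin_cases i
    · show D (e 0) = Mm.transpose 0
      rw [hX]; decide
    · show D (e 1) = Mm.transpose 1
      rw [hA]; decide
    · show D (e 2) = Mm.transpose 2
      rw [hB]; decide
    · show D (e 3) = Mm.transpose 3
      rw [hC1]; decide
    · show D (e 4) = Mm.transpose 4
      rw [hC2]; decide
    · show D (e 5) = Mm.transpose 5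
      rw [hC3]; decide
    · show D (e 6) = Mm.transpose 6
      rw [hD11]; decide
    · show D (e 7) = Mm.transpose 7
      rw [hD12]; decide
    · show D (e 8) = Mm.transpose 8
      rw [hD21]; decide
    · show D (e 9) = Mm.transpose 9
      rw [hD22]; decide
    · show D (e 10) = Mm.transpose 10
      rw [hE11]; decide
    · show D (e 11) = Mm.transpose 11
      rw [hE12]; decide
    · show D (e 12) = Mm.transpose 12
      rw [hE21]; decide
    · show D (e 13) = Mm.transpose 13
      rw [hE22]; decide
    · show D (e 14) = Mm.transpose 14
      rw [hF1]; decide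
    · show D (e 15) = Mm.transpose 15
      rw [hF2]; decide
    · show D (e 16) = Mm.transpose 16
      rw [hG11]; decide
    · show D (e 17) = Mm.transpose 17
      rw [hG12]; decide
    · show D (e 18) = Mm.transpose 18
      rw [hG21]; decide
    · show D (e 19) = Mm.transpose 19
      rw [hG22]; decide
    · show D (e 20) = Mm.transpose 20
      rw [hG31]; decide
    · show D (e 21) = Mm.transpose 21
      rw [hG32]; decide
  have hDD : D ∘ₗ D = 0 := by
    rw [hM, ← Matrix.mulVecLin_mul, show Mm * Mm = 0 from by decide,
      Matrix.mulVecLin_zero]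
  have h1 : Matrix.mulVecLin Lm ∘ₗ (D ∘ₗ Matrix.mulVecLin Jm) = LinearMap.id := by
    rw [hM, ← Matrix.mulVecLin_mul, ← Matrix.mulVecLin_mul,
      show Lm * (Mm * Jm) = 1 from by set_option maxRecDepth 100000 in decide, Matrix.mulVecLin_one]
  have hinj : Function.Injective (D ∘ₗ Matrix.mulVecLin Jm) := by
    have hli : Function.LeftInverse (Matrix.mulVecLin Lm) (D ∘ₗ Matrix.mulVecLin Jm) :=
      fun x => by simpa using LinearMap.congr_fun h1 x
    exact hli.injective
  have h2 : D ∘ₗ Matrix.mulVecLin Km = 0 := by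
    rw [hM, ← Matrix.mulVecLin_mul, show Mm * Km = 0 from by decide,
      Matrix.mulVecLin_zero]
  have h3 : Matrix.mulVecLin L2m ∘ₗ Matrix.mulVecLin Km = LinearMap.id := by
    rw [← Matrix.mulVecLin_mul, show L2m * Km = 1 from by decide, Matrix.mulVecLin_one]
  have hKinj : Function.Injective (Matrix.mulVecLin Km) := by
    have hli : Function.LeftInverse (Matrix.mulVecLin L2m) (Matrix.mulVecLin Km) :=
      fun x => by simpa using LinearMap.congr_fun h3 x
    exact hli.injective
  have hr1 : 10 ≤ Module.finrank (ZMod 2) ↥(LinearMap.range D) := by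
    have hfr := LinearMap.finrank_range_of_inj hinj
    have hle := Submodule.finrank_mono
      (LinearMap.range_comp_le_range (Matrix.mulVecLin Jm) D)
    simp only [hfr] at hle
    simpa using hle
  have hk1 : 12 ≤ Module.finrank (ZMod 2) ↥(LinearMap.ker D) := by
    have hfr := LinearMap.finrank_range_of_inj hKinj
    have hle := Submodule.finrank_mono (LinearMap.range_le_ker_iff.mpr h2)
    simp only [hfr] at hle
    simpa using hle
  have hrn := LinearMap.finrank_range_add_finrank_ker D
  rw [show Module.finrank (ZMod 2) (Fin 22 → ZMod 2) = 22 by simp] at hrn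
  have hrange : Module.finrank (ZMod 2) ↥(LinearMap.range D) = 10 := by omega
  have hker : Module.finrank (ZMod 2) ↥(LinearMap.ker D) = 12 := by omega
  have hle2 : LinearMap.range D ≤ LinearMap.ker D := LinearMap.range_le_ker_iff.mpr hDD
  have hN : Module.finrank (ZMod 2)
      ↥(Submodule.comap (LinearMap.ker D).subtype (LinearMap.range D)) = 10 :=
    (Submodule.comapSubtypeEquivOfLe hle2).finrank_eq.trans hrange
  have hq := Submodule.finrank_quotient_add_finrank
    (Submodule.comap (LinearMap.ker D).subtype (LinearMap.range D))
  rw [hN, hker] at hq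
  have hquot : Module.finrank (ZMod 2)
      (↥(LinearMap.ker D) ⧸
        Submodule.comap (LinearMap.ker D).subtype (LinearMap.range D)) = 2 := by omega
  refine ⟨hDD, hrange, hker, hquot, ?_⟩
  exact FiniteDimensional.nonempty_linearEquiv_of_finrank_eq
    (by rw [hquot]; simp [Module.finrank_prod])
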